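/- arXiv:1805.01139 — 3 statements merged into one kernel-verified Lean document; each statement's English description precedes it below -/
import Mathlib

section
/- Let X be a nonempty set, let B ⊆ P_∅(X) and let g be a nonnegative gamble on X. If for every nonnegative rational r the set {x ∈ X : g(x) ≥ r} is a finite union of pairwise disjoint events in B ∪ {X, ∅}, then g is B-measurable. -/
open scoped BigOperators

namespace IPaper

variable {X : Type*}

/-- A gamble on `X`: a bounded real-valued function. -/
def IsGamble (f : X → ℝ) : Prop := ∃ M : ℝ, ∀ x, |f x| ≤ M

/-- The indicator gamble of an event. -/
noncomputable def ind (B : Set X) : X → ℝ := Set.indicator B 1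

/-- The set `G_{>0}(X)` of nonnegative nonzero gambles. -/
def Gpos (X : Type*) : Set (X → ℝ) := {f | IsGamble f ∧ 0 ≤ f ∧ f ≠ 0}

/-- A coherent set of desirable gambles. -/
structure CoherentSDG (D : Set (X → ℝ)) : Prop where
  subset_gambles : ∀ f ∈ D, IsGamble f
  d1 : ∀ f : X → ℝ, IsGamble f → 0 ≤ f → f ≠ 0 → f ∈ D
  d2 : ∀ f ∈ D, ∀ l : ℝ, 0 < l → l • f ∈ D
  d3 : ∀ f ∈ D, ∀ g ∈ D, f + g ∈ D
  d4 : ∀ f : X → ℝ, f ≤ 0 → f ∉ D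

/-- `posi A`: positive linear hull of `A`. -/
def posi (A : Set (X → ℝ)) : Set (X → ℝ) :=
  {g | ∃ (n : ℕ) (l : Fin (n + 1) → ℝ) (h : Fin (n + 1) → X → ℝ),
    (∀ i, 0 < l i) ∧ (∀ i, h i ∈ A) ∧ g = ∑ i, l i • h i}

/-- `E(A) := posi (A ∪ G_{>0}(X))`. -/
def natExtSet (A : Set (X → ℝ)) : Set (X → ℝ) := posi (A ∪ Gpos X)

/-- `C(X)`: all pairs of a gamble and a nonempty event. -/
def domC (X : Type*) : Set ((X → ℝ) × Set X) := {p | IsGamble p.1 ∧ p.2.Nonempty}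

/-- The conditional lower prevision `lp_D` derived from a set of gambles `D`. -/
noncomputable def lpOf (D : Set (X → ℝ)) (f : X → ℝ) (B : Set X) : EReal :=
  sSup (Real.toEReal '' {m : ℝ | (fun x => (f x - m) * ind B x) ∈ D})

/-- Coherence (Williams) of a conditional lower prevision on a domain `C`. -/
def Coherent (C : Set ((X → ℝ) × Set X)) (lp : (X → ℝ) → Set X → EReal) : Prop :=
  ∃ D : Set (X → ℝ), CoherentSDG D ∧ ∀ p ∈ C, lp p.1 p.2 = lpOf D p.1 p.2

/-- The set `A_lp`. -/
def Alp (C : Set ((X → ℝ) × Set X)) (lp : (X → ℝ) → Set X → EReal) : Set (X → ℝ) :=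
  {g | ∃ p ∈ C, ∃ m : ℝ, (m : EReal) < lp p.1 p.2 ∧ g = fun x => (p.1 x - m) * ind p.2 x}

/-- `E(lp) := E(A_lp)`. -/
def ElpSet (C : Set ((X → ℝ) × Set X)) (lp : (X → ℝ) → Set X → EReal) : Set (X → ℝ) :=
  natExtSet (Alp C lp)

/-- The natural extension of `lp` to all of `C(X)`. -/
noncomputable def natExtLP (C : Set ((X → ℝ) × Set X)) (lp : (X → ℝ) → Set X → EReal)
    (f : X → ℝ) (B : Set X) : EReal :=
  lpOf (ElpSet C lp) f B

/-- Simple `B`-measurable gamble. -/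
def SimpleMeas (Bfam : Set (Set X)) (g : X → ℝ) : Prop :=
  ∃ (c0 : ℝ) (n : ℕ) (c : Fin n → ℝ) (Bs : Fin n → Set X),
    0 ≤ c0 ∧ (∀ i, 0 ≤ c i) ∧ (∀ i, Bs i ∈ Bfam) ∧
    g = fun x => c0 + ∑ i, c i * ind (Bs i) x

/-- `B`-measurable gamble: uniform limit of nonnegative simple `B`-measurable gambles. -/
def BMeas (Bfam : Set (Set X)) (g : X → ℝ) : Prop :=
  ∃ gs : ℕ → X → ℝ, (∀ n, 0 ≤ gs n ∧ SimpleMeas Bfam (gs n)) ∧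
    TendstoUniformly gs g Filter.atTop

/-- A conditional linear prevision on `C(X)`: a coherent self-conjugate conditional
lower prevision on the full domain. -/
def CondLinPrev (P : (X → ℝ) → Set X → EReal) : Prop :=
  Coherent (domC X) P ∧ ∀ p ∈ domC X, P p.1 p.2 = -P (-p.1) p.2

section Product

variable {X1 X2 : Type*}

/-- `A_{1→2}`. -/
def A12 (D2 : Set (X2 → ℝ)) (F1 : Set (Set X1)) : Set (X1 × X2 → ℝ) :=
  {g | ∃ f2 ∈ D2, ∃ B1 ∈ F1 ∪ {Set.univ}, g = fun p => f2 p.2 * ind B1 p.1}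

/-- `A_{2→1}`. -/
def A21 (D1 : Set (X1 → ℝ)) (F2 : Set (Set X2)) : Set (X1 × X2 → ℝ) :=
  {g | ∃ f1 ∈ D1, ∃ B2 ∈ F2 ∪ {Set.univ}, g = fun p => f1 p.1 * ind B2 p.2}

/-- `D1 ⊗ D2`, relative to the families of conditioning events `F1`, `F2`. -/
def indNatExt (D1 : Set (X1 → ℝ)) (D2 : Set (X2 → ℝ))
    (F1 : Set (Set X1)) (F2 : Set (Set X2)) : Set (X1 × X2 → ℝ) :=
  natExtSet (A12 D2 F1 ∪ A21 D1 F2)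

/-- `marg_1(D)`. -/
def marg1 (D : Set (X1 × X2 → ℝ)) : Set (X1 → ℝ) :=
  {f | IsGamble f ∧ (fun p : X1 × X2 => f p.1) ∈ D}

/-- `marg_2(D)`. -/
def marg2 (D : Set (X1 × X2 → ℝ)) : Set (X2 → ℝ) :=
  {f | IsGamble f ∧ (fun p : X1 × X2 => f p.2) ∈ D}

/-- `marg_1(D|B2)`. -/
def marg1c (D : Set (X1 × X2 → ℝ)) (B2 : Set X2) : Set (X1 → ℝ) :=
  {f | IsGamble f ∧ (fun p : X1 × X2 => f p.1 * ind B2 p.2) ∈ D}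

/-- `marg_2(D|B1)`. -/
def marg2c (D : Set (X1 × X2 → ℝ)) (B1 : Set X1) : Set (X2 → ℝ) :=
  {f | IsGamble f ∧ (fun p : X1 × X2 => f p.2 * ind B1 p.1) ∈ D}

/-- Epistemic independence of a set of desirable gambles on `X1 × X2`. -/
def EpIndSDG (F1 : Set (Set X1)) (F2 : Set (Set X2)) (D : Set (X1 × X2 → ℝ)) : Prop :=
  (∀ B2 ∈ F2, marg1c D B2 = marg1 D) ∧ (∀ B1 ∈ F1, marg2c D B1 = marg2 D)

/-- Independent product (of sets of desirable gambles). -/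
def IndProductSDG (F1 : Set (Set X1)) (F2 : Set (Set X2))
    (D1 : Set (X1 → ℝ)) (D2 : Set (X2 → ℝ)) (D : Set (X1 × X2 → ℝ)) : Prop :=
  CoherentSDG D ∧ EpIndSDG F1 F2 D ∧ marg1 D = D1 ∧ marg2 D = D2

/-- The independent natural extension `lp1 ⊗ lp2` on `C(X1 × X2)`. -/
noncomputable def lpProd (C1 : Set ((X1 → ℝ) × Set X1)) (lp1 : (X1 → ℝ) → Set X1 → EReal)
    (C2 : Set ((X2 → ℝ) × Set X2)) (lp2 : (X2 → ℝ) → Set X2 → EReal)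
    (F1 : Set (Set X1)) (F2 : Set (Set X2)) :
    (X1 × X2 → ℝ) → Set (X1 × X2) → EReal :=
  lpOf (indNatExt (ElpSet C1 lp1) (ElpSet C2 lp2) F1 F2)

/-- An independent domain `C ⊆ C(X1 × X2)`. -/
def IndepDomain (F1 : Set (Set X1)) (F2 : Set (Set X2))
    (C : Set ((X1 × X2 → ℝ) × Set (X1 × X2))) : Prop :=
  (∀ (f1 : X1 → ℝ) (B1 : Set X1), IsGamble f1 → B1.Nonempty → ∀ B2 ∈ F2,
    (((fun p : X1 × X2 => f1 p.1), B1 ×ˢ (Set.univ : Set X2)) ∈ C ↔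
      ((fun p : X1 × X2 => f1 p.1), B1 ×ˢ B2) ∈ C)) ∧
  (∀ (f2 : X2 → ℝ) (B2 : Set X2), IsGamble f2 → B2.Nonempty → ∀ B1 ∈ F1,
    (((fun p : X1 × X2 => f2 p.2), (Set.univ : Set X1) ×ˢ B2) ∈ C ↔
      ((fun p : X1 × X2 => f2 p.2), B1 ×ˢ B2) ∈ C))

/-- Epistemic independence of a conditional lower prevision on a domain `C`. -/
def EpIndLP (F1 : Set (Set X1)) (F2 : Set (Set X2))
    (C : Set ((X1 × X2 → ℝ) × Set (X1 × X2)))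
    (lp : (X1 × X2 → ℝ) → Set (X1 × X2) → EReal) : Prop :=
  (∀ (f1 : X1 → ℝ) (B1 : Set X1), IsGamble f1 → B1.Nonempty →
    ((fun p : X1 × X2 => f1 p.1), B1 ×ˢ (Set.univ : Set X2)) ∈ C → ∀ B2 ∈ F2,
    lp (fun p : X1 × X2 => f1 p.1) (B1 ×ˢ (Set.univ : Set X2)) =
      lp (fun p : X1 × X2 => f1 p.1) (B1 ×ˢ B2)) ∧
  (∀ (f2 : X2 → ℝ) (B2 : Set X2), IsGamble f2 → B2.Nonempty →
    ((fun p : X1 × X2 => f2 p.2), (Set.univ : Set X1) ×ˢ B2) ∈ C → ∀ B1 ∈ F1,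
    lp (fun p : X1 × X2 => f2 p.2) ((Set.univ : Set X1) ×ˢ B2) =
      lp (fun p : X1 × X2 => f2 p.2) (B1 ×ˢ B2))

/-- Independent product of two conditional lower previsions, on the joint domain `C`. -/
def IndProductLP (F1 : Set (Set X1)) (F2 : Set (Set X2))
    (C1 : Set ((X1 → ℝ) × Set X1)) (lp1 : (X1 → ℝ) → Set X1 → EReal)
    (C2 : Set ((X2 → ℝ) × Set X2)) (lp2 : (X2 → ℝ) → Set X2 → EReal)
    (C : Set ((X1 × X2 → ℝ) × Set (X1 × X2)))
    (lp : (X1 × X2 → ℝ) → Set (X1 × X2) → EReal) : Prop :=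
  Coherent C lp ∧ EpIndLP F1 F2 C lp ∧
  (∀ p ∈ C1, lp (fun q : X1 × X2 => p.1 q.1) (p.2 ×ˢ (Set.univ : Set X2)) = lp1 p.1 p.2) ∧
  (∀ p ∈ C2, lp (fun q : X1 × X2 => p.1 q.2) ((Set.univ : Set X1) ×ˢ p.2) = lp2 p.1 p.2)

end Product


section Aux

variable {Bfam : Set (Set X)}

lemma ind_nonneg' (B : Set X) (x : X) : 0 ≤ ind B x :=
  Set.indicator_nonneg (fun _ _ => zero_le_one) x

lemma simpleMeas_zero : SimpleMeas Bfam (fun _ => (0 : ℝ)) :=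
  ⟨0, 0, fun i => i.elim0, fun i => i.elim0, le_refl 0, fun i => i.elim0, fun i => i.elim0,
    by funext x; simp⟩

lemma simpleMeas_add {f g : X → ℝ} (hf : SimpleMeas Bfam f) (hg : SimpleMeas Bfam g) :
    SimpleMeas Bfam (fun x => f x + g x) := by
  obtain ⟨c0, n, c, Bs, hc0, hc, hB, rfl⟩ := hf
  obtain ⟨d0, m, d, Cs, hd0, hd, hC, rfl⟩ := hg
  refine ⟨c0 + d0, n + m, Fin.append c d, Fin.append Bs Cs, by positivity, ?_, ?_, ?_⟩
  · intro i
    refine Fin.addCases (fun j => ?_) (fun j => ?_) i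
    · simpa [Fin.append_left] using hc j
    · simpa [Fin.append_right] using hd j
  · intro i
    refine Fin.addCases (fun j => ?_) (fun j => ?_) i
    · simpa [Fin.append_left] using hB j
    · simpa [Fin.append_right] using hC j
  · funext x
    rw [Fin.sum_univ_add]
    simp only [Fin.append_left, Fin.append_right]
    ring

lemma simpleMeas_mul_ind {c : ℝ} (hc : 0 ≤ c) {B : Set X}
    (hB : B ∈ Bfam ∪ {Set.univ, ∅}) : SimpleMeas Bfam (fun x => c * ind B x) := by
  rcases hB with hB | hB
  · exact ⟨0, 1, fun _ => c, fun _ => B, le_refl 0, fun _ => hc, fun _ => hB,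
      by funext x; simp⟩
  · simp only [Set.mem_insert_iff, Set.mem_singleton_iff] at hB
    rcases hB with rfl | rfl
    · exact ⟨c, 0, fun i => i.elim0, fun i => i.elim0, hc, fun i => i.elim0, fun i => i.elim0,
        by funext x; simp [ind]⟩
    · exact ⟨0, 0, fun i => i.elim0, fun i => i.elim0, le_refl 0, fun i => i.elim0,
        fun i => i.elim0, by funext x; simp [ind]⟩

lemma simpleMeas_sum_fin : ∀ {n : ℕ} (f : Fin n → X → ℝ),
    (∀ i, SimpleMeas Bfam (f i)) → SimpleMeas Bfam (fun x => ∑ i, f i x) := by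
  intro n
  induction n with
  | zero => intro f _; simpa using (simpleMeas_zero : SimpleMeas Bfam _)
  | succ n ih =>
      intro f hf
      simpa [Fin.sum_univ_succ] using
        simpleMeas_add (hf 0) (ih (fun i => f i.succ) (fun i => hf i.succ))

lemma simpleMeas_sum_range (K : ℕ) (f : ℕ → X → ℝ)
    (hf : ∀ k, SimpleMeas Bfam (f k)) :
    SimpleMeas Bfam (fun x => ∑ k ∈ Finset.range K, f k x) := by
  induction K with
  | zero => simpa using (simpleMeas_zero : SimpleMeas Bfam _)
  | succ K ih => simpa [Finset.sum_range_succ] using simpleMeas_add ih (hf K)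

lemma ind_iUnion {n : ℕ} (Bs : Fin n → Set X)
    (hdisj : Pairwise fun i j => Disjoint (Bs i) (Bs j)) (x : X) :
    ind (⋃ i, Bs i) x = ∑ i, ind (Bs i) x := by
  classical
  by_cases hx : x ∈ ⋃ i, Bs i
  · obtain ⟨i, hi⟩ := Set.mem_iUnion.mp hx
    have hz : ∀ j, j ≠ i → ind (Bs j) x = 0 := by
      intro j hj
      exact Set.indicator_of_notMem
        (fun hxj => Set.disjoint_left.mp (hdisj hj) hxj hi) _
    rw [Finset.sum_eq_single i (fun j _ hj => hz j hj) (by simp)]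
    simp [ind, Set.indicator_of_mem, hx, hi]
  · have hz : ∀ i, x ∉ Bs i := fun i hxi => hx (Set.mem_iUnion.mpr ⟨i, hxi⟩)
    simp [ind, Set.indicator_of_notMem, hx, hz]

end Aux

/-- Proposition 2: sufficient condition for `B`-measurability. -/
theorem stmt0 {X : Type*} [Nonempty X] (Bfam : Set (Set X))
    (hBfam : ∀ A ∈ Bfam, A.Nonempty)
    (g : X → ℝ) (hg : IsGamble g) (hg0 : 0 ≤ g)
    (h : ∀ r : ℚ, 0 ≤ r → ∃ (n : ℕ) (Bs : Fin n → Set X),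
      (∀ i, Bs i ∈ Bfam ∪ {Set.univ, ∅}) ∧
      (Pairwise fun i j => Disjoint (Bs i) (Bs j)) ∧
      {x | (r : ℝ) ≤ g x} = ⋃ i, Bs i) :
    BMeas Bfam g := by
  classical
  obtain ⟨M, hM⟩ := hg
  set K : ℕ → ℕ := fun n => ⌊(2:ℝ)^n * M⌋₊ with hK
  set gs : ℕ → X → ℝ := fun n x =>
    ∑ k ∈ Finset.range (K n), (2^n : ℝ)⁻¹ * ind {y | ((k:ℝ)+1)/2^n ≤ g y} x with hgs
  have hp : ∀ n : ℕ, (0:ℝ) < 2^n := fun n => by positivity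
  -- pointwise value of gs
  have hval : ∀ n x, gs n x = (⌊(2:ℝ)^n * g x⌋₊ : ℝ) * (2^n)⁻¹ := by
    intro n x
    have hgx : 0 ≤ g x := hg0 x
    have hnn : 0 ≤ (2:ℝ)^n * g x := mul_nonneg (le_of_lt (hp n)) hgx
    have hterm : ∀ k : ℕ,
        ((2:ℝ)^n)⁻¹ * ind {y | ((k:ℝ)+1)/2^n ≤ g y} x
          = if k < ⌊(2:ℝ)^n * g x⌋₊ then ((2:ℝ)^n)⁻¹ else 0 := by
      intro k
      have hiff : ((k:ℝ)+1)/2^n ≤ g x ↔ k < ⌊(2:ℝ)^n * g x⌋₊ := by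
        rw [div_le_iff₀ (hp n), ← Nat.add_one_le_iff, Nat.le_floor_iff hnn]
        push_cast
        constructor <;> intro <;> linarith
      by_cases hkm : k < ⌊(2:ℝ)^n * g x⌋₊
      · have hmem : x ∈ {y | ((k:ℝ)+1)/2^n ≤ g y} := hiff.mpr hkm
        simp [ind, Set.indicator_of_mem hmem, hkm]
      · have hmem : x ∉ {y | ((k:ℝ)+1)/2^n ≤ g y} := fun hx => hkm (hiff.mp hx)
        simp [ind, Set.indicator_of_notMem hmem, hkm]
    have hmK : ⌊(2:ℝ)^n * g x⌋₊ ≤ K n := by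
      refine Nat.floor_mono (mul_le_mul_of_nonneg_left ?_ (le_of_lt (hp n)))
      exact le_trans (le_abs_self _) (hM x)
    have hfilter : (Finset.range (K n)).filter (fun k => k < ⌊(2:ℝ)^n * g x⌋₊)
        = Finset.range ⌊(2:ℝ)^n * g x⌋₊ := by
      ext k; simp only [Finset.mem_filter, Finset.mem_range]; omega
    calc gs n x = ∑ k ∈ Finset.range (K n),
          if k < ⌊(2:ℝ)^n * g x⌋₊ then ((2:ℝ)^n)⁻¹ else 0 := by
          simp only [hgs]; exact Finset.sum_congr rfl (fun k _ => hterm k)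
      _ = ∑ k ∈ (Finset.range (K n)).filter (fun k => k < ⌊(2:ℝ)^n * g x⌋₊),
          ((2:ℝ)^n)⁻¹ := by rw [Finset.sum_filter]
      _ = (⌊(2:ℝ)^n * g x⌋₊ : ℝ) * (2^n)⁻¹ := by
          rw [hfilter, Finset.sum_const, Finset.card_range, nsmul_eq_mul]
  -- uniform bound
  have hbound : ∀ n x, |g x - gs n x| ≤ (2^n : ℝ)⁻¹ := by
    intro n x
    rw [hval n x]
    have h2n : ((2:ℝ)^n) ≠ 0 := ne_of_gt (hp n)
    have h1 : ((⌊(2:ℝ)^n * g x⌋₊ : ℝ)) ≤ (2:ℝ)^n * g x :=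
      Nat.floor_le (mul_nonneg (le_of_lt (hp n)) (hg0 x))
    have h2 : (2:ℝ)^n * g x < (⌊(2:ℝ)^n * g x⌋₊ : ℝ) + 1 := Nat.lt_floor_add_one _
    rw [abs_le]
    have key : (2:ℝ)^n * g x * ((2:ℝ)^n)⁻¹ = g x := by field_simp
    have h3 := mul_le_mul_of_nonneg_right h1 (le_of_lt (inv_pos.mpr (hp n)))
    have h4 := mul_lt_mul_of_pos_right h2 (inv_pos.mpr (hp n))
    rw [key] at h3 h4
    constructor <;> nlinarith [h3, h4, inv_pos.mpr (hp n)]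
  refine ⟨gs, fun n => ⟨?_, ?_⟩, ?_⟩
  · -- nonnegativity
    intro x
    exact Finset.sum_nonneg fun k _ =>
      mul_nonneg (le_of_lt (inv_pos.mpr (hp n))) (ind_nonneg' _ x)
  · -- simple measurability
    refine simpleMeas_sum_range (K n) _ (fun k => ?_)
    obtain ⟨nk, Bs, hBmem, hdisj, hset⟩ :=
      h (((k:ℚ)+1)/2^n) (by positivity)
    have hcast : ((((k:ℚ)+1)/2^n : ℚ) : ℝ) = ((k:ℝ)+1)/2^n := by push_cast; ring
    have hsetq : {y | ((k:ℝ)+1)/2^n ≤ g y} = ⋃ i, Bs i := by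
      rw [← hset]; ext y; simp only [Set.mem_setOf_eq, hcast]
    have heq : (fun x => (2^n : ℝ)⁻¹ * ind {y | ((k:ℝ)+1)/2^n ≤ g y} x)
        = fun x => ∑ i, (2^n : ℝ)⁻¹ * ind (Bs i) x := by
      funext x
      rw [hsetq, ind_iUnion _ hdisj, Finset.mul_sum]
    rw [heq]
    exact simpleMeas_sum_fin _ fun i =>
      simpleMeas_mul_ind (le_of_lt (inv_pos.mpr (hp n))) (hBmem i)
  · -- uniform convergence
    rw [Metric.tendstoUniformly_iff]
    intro ε hε
    have htend : Filter.Tendsto (fun n : ℕ => ((2:ℝ)^n)⁻¹) Filter.atTop (nhds 0) := by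
      simpa [inv_pow] using
        tendsto_pow_atTop_nhds_zero_of_lt_one (by norm_num : (0:ℝ) ≤ 2⁻¹)
          (by norm_num : (2:ℝ)⁻¹ < 1)
    filter_upwards [htend.eventually (gt_mem_nhds hε)] with n hn x
    calc dist (g x) (gs n x) = |g x - gs n x| := Real.dist_eq _ _
      _ ≤ (2^n : ℝ)⁻¹ := hbound n x
      _ < ε := hn

end IPaper
end

section
/- Let lp be a coherent conditional lower prevision on C ⊆ C(X) and let E be its natural extension, defined by E(f|B) := lp_{E(lp)}(f|B) for all (f,B) ∈ C(X). Then E is a coherent conditional lower prevision on C(X) that coincides with lp on C, and E is pointwise smallest with this property: for any coherent conditional lower prevision lp' on C(X) that coincides with lp on C, one has E(f|B) ≤ lp'(f|B) for all (f,B) ∈ C(X). -/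
open scoped BigOperators

namespace IPaper

variable {X : Type*}

section Stmt4Aux

variable {X : Type*}

lemma mem_posi_self' {A : Set (X → ℝ)} {g : X → ℝ} (hg : g ∈ A) : g ∈ posi A := by
  refine ⟨0, fun _ => 1, fun _ => g, fun _ => one_pos, fun _ => hg, ?_⟩
  simp

lemma sum_mem_D' {D : Set (X → ℝ)} (hD : CoherentSDG D) : ∀ {n : ℕ}
    (g : Fin (n + 1) → X → ℝ), (∀ i, g i ∈ D) → ∑ i, g i ∈ D := by
  intro n
  induction n with
  | zero => intro g hg; simpa using hg 0
  | succ n ih =>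
      intro g hg
      rw [Fin.sum_univ_succ]
      exact hD.d3 _ (hg 0) _ (ih (fun i => g i.succ) (fun i => hg i.succ))

lemma posi_subset' {A D : Set (X → ℝ)} (hD : CoherentSDG D) (hAD : A ⊆ D) :
    posi A ⊆ D := by
  rintro g ⟨n, l, h, hl, hh, rfl⟩
  exact sum_mem_D' hD _ (fun i => hD.d2 _ (hAD (hh i)) _ (hl i))

lemma posi_smul' {A : Set (X → ℝ)} {g : X → ℝ} (hg : g ∈ posi A) {c : ℝ} (hc : 0 < c) :
    c • g ∈ posi A := by
  obtain ⟨n, l, h, hl, hh, rfl⟩ := hg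
  refine ⟨n, fun i => c * l i, h, fun i => mul_pos hc (hl i), hh, ?_⟩
  rw [Finset.smul_sum]
  simp [smul_smul]

lemma posi_add' {A : Set (X → ℝ)} {g1 g2 : X → ℝ} (h1 : g1 ∈ posi A) (h2 : g2 ∈ posi A) :
    g1 + g2 ∈ posi A := by
  obtain ⟨n, l, h, hl, hh, rfl⟩ := h1
  obtain ⟨m, l', h', hl', hh', rfl⟩ := h2
  refine ⟨n + 1 + m, (Fin.append l l' : Fin ((n + 1) + (m + 1)) → ℝ),
    (Fin.append h h' : Fin ((n + 1) + (m + 1)) → X → ℝ), ?_, ?_, ?_⟩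
  · exact fun i => Fin.addCases (motive := fun i => 0 < Fin.append l l' i)
      (fun i => by simpa using hl i) (fun i => by simpa using hl' i) i
  · exact fun i => Fin.addCases (motive := fun i => Fin.append h h' i ∈ A)
      (fun i => by simpa using hh i) (fun i => by simpa using hh' i) i
  · have key : ∑ i : Fin ((n + 1) + (m + 1)), Fin.append l l' i • Fin.append h h' i
        = (∑ i : Fin (n + 1), l i • h i) + ∑ i : Fin (m + 1), l' i • h' i := by
      rw [Fin.sum_univ_add]
      simp
    exact key.symm

lemma coherent_natExtSet' {A D : Set (X → ℝ)} (hD : CoherentSDG D) (hAD : A ⊆ D) :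
    CoherentSDG (natExtSet A) := by
  have hsub : natExtSet A ⊆ D := posi_subset' hD (by
    rintro g (hg | hg)
    · exact hAD hg
    · exact hD.d1 g hg.1 hg.2.1 hg.2.2)
  exact
    { subset_gambles := fun f hf => hD.subset_gambles f (hsub hf)
      d1 := fun f hf h0 hne => mem_posi_self' (Or.inr ⟨hf, h0, hne⟩)
      d2 := fun f hf l hl => posi_smul' hf hl
      d3 := fun f hf g hg => posi_add' hf hg
      d4 := fun f hf hmem => hD.d4 f hf (hsub hmem) }

lemma natExtSet_subset' {A D : Set (X → ℝ)} (hD : CoherentSDG D) (hAD : A ⊆ D) :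
    natExtSet A ⊆ D :=
  posi_subset' hD (by
    rintro g (hg | hg)
    · exact hAD hg
    · exact hD.d1 g hg.1 hg.2.1 hg.2.2)

lemma lpOf_mono' {D1 D2 : Set (X → ℝ)} (h : D1 ⊆ D2) (f : X → ℝ) (B : Set X) :
    lpOf D1 f B ≤ lpOf D2 f B :=
  sSup_le_sSup (Set.image_mono (fun _ hm => h hm))

lemma sSup_lt_eq' (L : EReal) :
    sSup (Real.toEReal '' {m : ℝ | (m : EReal) < L}) = L := by
  apply le_antisymm
  · exact sSup_le (by rintro x ⟨m, hm, rfl⟩; exact hm.le)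
  · refine le_of_forall_lt (fun c hc => ?_)
    obtain ⟨m, hcm, hmL⟩ := EReal.exists_between_coe_real hc
    exact hcm.trans_le (le_sSup ⟨m, hmL, rfl⟩)

lemma mem_of_lt_lpOf' {D : Set (X → ℝ)} (hD : CoherentSDG D) {f : X → ℝ} {B : Set X}
    (hB : B.Nonempty) {m : ℝ} (hm : (m : EReal) < lpOf D f B) :
    (fun x => (f x - m) * ind B x) ∈ D := by
  rw [lpOf, lt_sSup_iff] at hm
  obtain ⟨_, ⟨μ, hμ, rfl⟩, hmμ⟩ := hm
  have hmμ' : m < μ := by exact_mod_cast hmμ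
  have hind01 : ∀ x, ind B x = 0 ∨ ind B x = 1 := by
    intro x
    by_cases hx : x ∈ B
    · exact Or.inr (by simp [ind, Set.indicator_of_mem hx])
    · exact Or.inl (by simp [ind, Set.indicator_of_notMem hx])
  have h1 : (fun x => (μ - m) * ind B x) ∈ D := by
    apply hD.d1
    · refine ⟨μ - m, fun x => ?_⟩
      rcases hind01 x with hx | hx <;>
        simp [hx, abs_of_nonneg (sub_nonneg.2 hmμ'.le), sub_nonneg.2 hmμ'.le]
    · intro x
      rcases hind01 x with hx | hx <;> simp [hx] <;> linarith
    · intro hzero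
      obtain ⟨b, hb⟩ := hB
      have hb1 : ind B b = 1 := by simp [ind, Set.indicator_of_mem hb]
      have := congrFun hzero b
      simp only [hb1, mul_one, Pi.zero_apply] at this
      linarith
  have h2 := hD.d3 _ hμ _ h1
  have heq : (fun x => (f x - m) * ind B x)
      = (fun x => (f x - μ) * ind B x) + fun x => (μ - m) * ind B x := by
    funext x; simp only [Pi.add_apply]; ring
  rw [heq]; exact h2

lemma Alp_subset' {C : Set ((X → ℝ) × Set X)} (hC : C ⊆ domC X)
    {lp : (X → ℝ) → Set X → EReal} {D : Set (X → ℝ)} (hD : CoherentSDG D)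
    (hcoin : ∀ p ∈ C, lp p.1 p.2 = lpOf D p.1 p.2) :
    Alp C lp ⊆ D := by
  rintro g ⟨p, hp, m, hm, rfl⟩
  rw [hcoin p hp] at hm
  exact mem_of_lt_lpOf' hD (hC hp).2 hm

end Stmt4Aux

/-- Proposition 5: the natural extension is the pointwise smallest
coherent extension of `lp` to all of `C(X)`. -/
theorem stmt4 {X : Type*} [Nonempty X] (C : Set ((X → ℝ) × Set X)) (hC : C ⊆ domC X)
    (lp : (X → ℝ) → Set X → EReal) (hlp : Coherent C lp) :
    Coherent (domC X) (natExtLP C lp) ∧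
    (∀ p ∈ C, natExtLP C lp p.1 p.2 = lp p.1 p.2) ∧
    (∀ lp' : (X → ℝ) → Set X → EReal, Coherent (domC X) lp' →
      (∀ p ∈ C, lp' p.1 p.2 = lp p.1 p.2) →
      ∀ p ∈ domC X, natExtLP C lp p.1 p.2 ≤ lp' p.1 p.2) := by
  obtain ⟨D, hD, hcoin⟩ := hlp
  have hAlpD : Alp C lp ⊆ D := Alp_subset' hC hD hcoin
  have hE : CoherentSDG (ElpSet C lp) := coherent_natExtSet' hD hAlpD
  have hEsub : ElpSet C lp ⊆ D := natExtSet_subset' hD hAlpD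
  refine ⟨⟨ElpSet C lp, hE, fun p _ => rfl⟩, ?_, ?_⟩
  · intro p hp
    apply le_antisymm
    · rw [hcoin p hp]
      exact lpOf_mono' hEsub p.1 p.2
    · conv_lhs => rw [← sSup_lt_eq' (lp p.1 p.2)]
      apply sSup_le_sSup
      apply Set.image_mono
      intro m hm
      exact mem_posi_self' (Or.inl ⟨p, hp, m, hm, rfl⟩)
  · intro lp' hlp' hcoin' p hp
    obtain ⟨D', hD', hco'⟩ := hlp'
    have hAlp' : Alp C lp ⊆ D' :=
      Alp_subset' hC hD' (fun q hq => (hcoin' q hq).symm.trans (hco' q (hC hq)))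
    have hsub' : ElpSet C lp ⊆ D' := natExtSet_subset' hD' hAlp'
    rw [hco' p hp]
    exact lpOf_mono' hsub' p.1 p.2

end IPaper
end

section
/- Let G ⊆ G(X) be a linear space of gambles containing the constant gamble 1. Then a lower prevision lp on G (i.e., a conditional lower prevision on { (f, X) : f ∈ G }, writing lp(f) := lp(f|X)) is coherent if and only if it is real-valued and satisfies: (LP1) lp(f) ≥ inf_{x∈X} f(x) for all f ∈ G; (LP2) lp(λf) = λ·lp(f) for all f ∈ G and λ ≥ 0; (LP3) lp(f+g) ≥ lp(f) + lp(g) for all f, g ∈ G. -/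
open scoped BigOperators

namespace IPaper

variable {X : Type*}

section Stmt7Aux

variable {X : Type*}

lemma sub_mul_ind_univ' (f : X → ℝ) (m : ℝ) :
    (fun x => (f x - m) * ind (Set.univ : Set X) x) = fun x => f x - m := by
  funext x; simp [ind]

lemma sSup_image_toEReal' {S : Set ℝ} (hne : S.Nonempty) (hbd : BddAbove S) :
    sSup (Real.toEReal '' S) = ((sSup S : ℝ) : EReal) := by
  apply le_antisymm
  · apply sSup_le
    rintro x ⟨m, hm, rfl⟩
    exact_mod_cast le_csSup hbd hm
  · by_contra h
    push_neg at h
    obtain ⟨c, hc1, hc2⟩ := EReal.exists_between_coe_real h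
    obtain ⟨m, hmS, hcm⟩ := exists_lt_of_lt_csSup hne (by exact_mod_cast hc2)
    have h1 : (m : EReal) ≤ sSup (Real.toEReal '' S) := le_sSup ⟨m, hmS, rfl⟩
    have h2 : (c : EReal) < (m : EReal) := by exact_mod_cast hcm
    exact absurd (h2.trans_le h1) (not_lt.2 hc1.le)

lemma csSup_ge_of_forall_lt_mem' {S : Set ℝ} (hbd : BddAbove S) {r : ℝ}
    (h : ∀ c < r, c ∈ S) : r ≤ sSup S := by
  by_contra hc
  push_neg at hc
  have h1 : (sSup S + r) / 2 ∈ S := h _ (by linarith)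
  have := le_csSup hbd h1
  linarith

end Stmt7Aux

/-- Corollary 5: an unconditional lower prevision on a linear space of
gambles containing the constant gamble 1 is coherent iff it is real-valued and
satisfies LP1–LP3. -/
theorem stmt7 {X : Type*} [Nonempty X] (G : Submodule ℝ (X → ℝ))
    (hG : ∀ f ∈ G, IsGamble f) (h1 : (fun _ : X => (1 : ℝ)) ∈ G)
    (lp : (X → ℝ) → Set X → EReal) :
    Coherent {p : (X → ℝ) × Set X | p.1 ∈ G ∧ p.2 = Set.univ} lp ↔
      ((∀ f ∈ G, ∃ r : ℝ, lp f Set.univ = (r : EReal)) ∧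
        (∀ f ∈ G, (↑(sInf (Set.range f)) : EReal) ≤ lp f Set.univ) ∧
        (∀ f ∈ G, ∀ l : ℝ, 0 ≤ l → lp (l • f) Set.univ = (l : EReal) * lp f Set.univ) ∧
        (∀ f ∈ G, ∀ g ∈ G, lp f Set.univ + lp g Set.univ ≤ lp (f + g) Set.univ)) := by
  constructor
  · rintro ⟨D, hD, heq⟩
    set S : (X → ℝ) → Set ℝ := fun f => {m : ℝ | (fun x => f x - m) ∈ D} with hSdef
    have hne : ∀ f : X → ℝ, IsGamble f → (S f).Nonempty := by
      rintro f ⟨M, hM⟩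
      have hM0 : 0 ≤ M := le_trans (abs_nonneg _) (hM (Classical.arbitrary X))
      refine ⟨-(M+1), ?_⟩
      show (fun x => f x - -(M+1)) ∈ D
      apply hD.d1
      · refine ⟨2*M+2, fun x => ?_⟩
        show |f x - -(M+1)| ≤ 2*M+2
        have := abs_le.mp (hM x)
        rw [abs_le]
        constructor <;> linarith [this.1, this.2]
      · intro x
        have := (abs_le.mp (hM x)).1
        simp only [Pi.zero_apply]
        linarith
      · intro h0
        have h1 := congrFun h0 (Classical.arbitrary X)
        have h2 := (abs_le.mp (hM (Classical.arbitrary X))).1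
        simp only [Pi.zero_apply] at h1
        linarith
    have hbdd : ∀ f : X → ℝ, IsGamble f → BddAbove (S f) := by
      rintro f ⟨M, hM⟩
      refine ⟨M, fun m hm => ?_⟩
      by_contra hc
      push_neg at hc
      refine hD.d4 _ (fun x => ?_) hm
      have := (abs_le.mp (hM x)).2
      simp only [Pi.zero_apply]
      linarith
    have hR : ∀ f ∈ G, lp f Set.univ = ((sSup (S f) : ℝ) : EReal) := by
      intro f hf
      have h0 := heq (f, Set.univ) ⟨hf, rfl⟩
      simp only [lpOf, sub_mul_ind_univ'] at h0
      rw [h0]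
      exact sSup_image_toEReal' (hne f (hG f hf)) (hbdd f (hG f hf))
    refine ⟨fun f hf => ⟨_, hR f hf⟩, ?_, ?_, ?_⟩
    · -- LP1
      intro f hf
      rw [hR f hf, EReal.coe_le_coe_iff]
      obtain ⟨M, hM⟩ := hG f hf
      have hinf_le : ∀ x, sInf (Set.range f) ≤ f x := by
        intro x
        refine csInf_le ⟨-M, ?_⟩ ⟨x, rfl⟩
        rintro b ⟨x', rfl⟩
        exact (abs_le.mp (hM x')).1
      have hlow : ∀ c, c < sInf (Set.range f) → c ∈ S f := by
        intro c hc
        show (fun x => f x - c) ∈ D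
        apply hD.d1
        · refine ⟨M + |c|, fun x => ?_⟩
          show |f x - c| ≤ M + |c|
          have := abs_le.mp (hM x)
          have h1 := le_abs_self c
          have h2 := neg_abs_le c
          rw [abs_le]
          constructor <;> linarith [this.1, this.2]
        · intro x
          have := hinf_le x
          simp only [Pi.zero_apply]
          linarith
        · intro h0
          have h1 := congrFun h0 (Classical.arbitrary X)
          have h2 := hinf_le (Classical.arbitrary X)
          simp only [Pi.zero_apply] at h1
          linarith
      exact csSup_ge_of_forall_lt_mem' (hbdd f (hG f hf)) hlow
    · -- LP2
      intro f hf l hl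
      rcases eq_or_lt_of_le hl with h0 | hpos
      · -- l = 0
        have hzG : (0:ℝ) • f ∈ G := G.smul_mem _ hf
        rw [← h0, hR _ hzG, hR f hf]
        have hSz : sSup (S ((0:ℝ) • f)) = 0 := by
          have hset : S ((0:ℝ) • f) = Set.Iio 0 := by
            ext m
            show (fun x => ((0:ℝ) • f) x - m) ∈ D ↔ m ∈ Set.Iio 0
            have he : (fun x => ((0:ℝ) • f) x - m) = fun _ : X => -m := by
              funext x; simp
            rw [he, Set.mem_Iio]
            constructor
            · intro hm
              by_contra hc
              push_neg at hc
              refine hD.d4 _ (fun x => ?_) hm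
              simp only [Pi.zero_apply]
              linarith
            · intro hm
              apply hD.d1
              · exact ⟨|m|, fun x => by show |(-m : ℝ)| ≤ |m|; rw [abs_neg]⟩
              · intro x
                simp only [Pi.zero_apply]
                linarith
              · intro h0'
                have h1 := congrFun h0' (Classical.arbitrary X)
                simp only [Pi.zero_apply] at h1
                linarith
          rw [hset, csSup_Iio]
        rw [hSz, ← EReal.coe_mul, zero_mul]
      · -- l > 0
        have hlfG := G.smul_mem l hf
        have h12 : ∀ m ∈ S f, l * m ∈ S (l • f) := by
          intro m hm
          have hd := hD.d2 _ hm l hpos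
          have he : l • (fun x => f x - m) = fun x => (l • f) x - l * m := by
            funext x
            simp [mul_sub]
          rwa [he] at hd
        have h21 : ∀ m ∈ S (l • f), l⁻¹ * m ∈ S f := by
          intro m hm
          have hd := hD.d2 _ hm l⁻¹ (by positivity)
          have he : l⁻¹ • (fun x => (l • f) x - m) = fun x => f x - l⁻¹ * m := by
            funext x
            have hl0 : l ≠ 0 := ne_of_gt hpos
            simp [mul_sub]
            field_simp
          rwa [he] at hd
        have hkey : sSup (S (l • f)) = l * sSup (S f) := by
          have hl0 : l ≠ 0 := ne_of_gt hpos
          apply le_antisymm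
          · apply csSup_le (hne _ (hG _ hlfG))
            intro m hm
            have h1 := le_csSup (hbdd f (hG f hf)) (h21 m hm)
            have h2 : m = l * (l⁻¹ * m) := by field_simp
            rw [h2]
            exact mul_le_mul_of_nonneg_left h1 hpos.le
          · have h2 : sSup (S f) ≤ l⁻¹ * sSup (S (l • f)) := by
              apply csSup_le (hne f (hG f hf))
              intro m hm
              have h1 := le_csSup (hbdd _ (hG _ hlfG)) (h12 m hm)
              have h3 : m = l⁻¹ * (l * m) := by field_simp
              rw [h3]
              exact mul_le_mul_of_nonneg_left h1 (by positivity)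
            calc l * sSup (S f) ≤ l * (l⁻¹ * sSup (S (l • f))) :=
                  mul_le_mul_of_nonneg_left h2 hpos.le
              _ = sSup (S (l • f)) := by field_simp
        rw [hR _ hlfG, hR f hf, hkey, EReal.coe_mul]
    · -- LP3
      intro f hf g hg
      have hfgG := G.add_mem hf hg
      have hadd : ∀ m ∈ S f, ∀ m' ∈ S g, m + m' ∈ S (f + g) := by
        intro m hm m' hm'
        have hd := hD.d3 _ hm _ hm'
        have he : ((fun x => f x - m) + fun x => g x - m') =
            fun x => (f + g) x - (m + m') := by
          funext x
          simp only [Pi.add_apply]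
          ring
        rwa [he] at hd
      rw [hR f hf, hR g hg, hR _ hfgG, ← EReal.coe_add, EReal.coe_le_coe_iff]
      have hmain : sSup (S f) ≤ sSup (S (f + g)) - sSup (S g) := by
        apply csSup_le (hne f (hG f hf))
        intro m hm
        have h2 : sSup (S g) ≤ sSup (S (f + g)) - m := by
          apply csSup_le (hne g (hG g hg))
          intro m' hm'
          have := le_csSup (hbdd _ (hG _ hfgG)) (hadd m hm m' hm')
          linarith
        linarith
      linarith
  · rintro ⟨hreal, hLP1, hLP2, hLP3⟩
    have hlp0 : lp (0 : X → ℝ) Set.univ = ((0:ℝ) : EReal) := by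
      have h := hLP2 _ h1 0 le_rfl
      obtain ⟨r, hr⟩ := hreal _ h1
      have hz : (0:ℝ) • (fun _ : X => (1:ℝ)) = (0 : X → ℝ) := by
        funext x; simp
      rw [hz] at h
      rw [h, hr, ← EReal.coe_mul, zero_mul]
    have hub : ∀ f ∈ G, ∀ c : ℝ, (∀ x, f x ≤ c) → lp f Set.univ ≤ (c : EReal) := by
      intro f hf c hc
      obtain ⟨r, hr⟩ := hreal f hf
      obtain ⟨s, hs⟩ := hreal _ (G.neg_mem hf)
      have h3 := hLP3 f hf (-f) (G.neg_mem hf)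
      have hfe : f + -f = (0 : X → ℝ) := by funext x; simp
      rw [hfe, hlp0, hr, hs, ← EReal.coe_add, EReal.coe_le_coe_iff] at h3
      have h1' := hLP1 _ (G.neg_mem hf)
      rw [hs, EReal.coe_le_coe_iff] at h1'
      have hinf : -c ≤ sInf (Set.range (-f)) := by
        refine le_csInf (Set.range_nonempty _) ?_
        rintro b ⟨x, rfl⟩
        simp only [Pi.neg_apply, neg_le_neg_iff]
        exact hc x
      have hsc : -c ≤ s := le_trans hinf h1'
      rw [hr, EReal.coe_le_coe_iff]
      linarith
    refine ⟨{g : X → ℝ | IsGamble g ∧ ((0 ≤ g ∧ g ≠ 0) ∨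
      ∃ f ∈ G, ∃ m : ℝ, (m : EReal) < lp f Set.univ ∧ ∀ x, f x - m ≤ g x)}, ?_, ?_⟩
    · constructor
      · exact fun g hg => hg.1
      · exact fun f hf h0 hne' => ⟨hf, Or.inl ⟨h0, hne'⟩⟩
      · intro g hg l hl
        obtain ⟨⟨M, hM⟩, hcase⟩ := hg
        refine ⟨⟨|l| * M, fun x => ?_⟩, ?_⟩
        · rw [Pi.smul_apply, smul_eq_mul, abs_mul]
          exact mul_le_mul_of_nonneg_left (hM x) (abs_nonneg l)
        rcases hcase with ⟨h0, hnz⟩ | ⟨f, hf, m, hm, hdom⟩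
        · left
          constructor
          · intro x
            simp only [Pi.smul_apply, smul_eq_mul, Pi.zero_apply]
            exact mul_nonneg hl.le (h0 x)
          · intro hz
            apply hnz
            funext x
            have h2 := congrFun hz x
            simp only [Pi.smul_apply, smul_eq_mul, Pi.zero_apply] at h2 ⊢
            exact (mul_eq_zero.mp h2).resolve_left (ne_of_gt hl)
        · right
          obtain ⟨r, hr⟩ := hreal f hf
          refine ⟨l • f, G.smul_mem l hf, l * m, ?_, ?_⟩
          · rw [hLP2 f hf l hl.le, hr, ← EReal.coe_mul, EReal.coe_lt_coe_iff]
            rw [hr, EReal.coe_lt_coe_iff] at hm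
            exact mul_lt_mul_of_pos_left hm hl
          · intro x
            simp only [Pi.smul_apply, smul_eq_mul]
            have := hdom x
            nlinarith
      · intro g1 hg1 g2 hg2
        obtain ⟨⟨M1, hM1⟩, hc1⟩ := hg1
        obtain ⟨⟨M2, hM2⟩, hc2⟩ := hg2
        refine ⟨⟨M1 + M2, fun x => (abs_add_le _ _).trans (add_le_add (hM1 x) (hM2 x))⟩, ?_⟩
        rcases hc1 with ⟨h01, hnz1⟩ | ⟨f1, hf1, m1, hm1, hd1⟩
        · rcases hc2 with ⟨h02, hnz2⟩ | ⟨f2, hf2, m2, hm2, hd2⟩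
          · left
            refine ⟨fun x => add_nonneg (h01 x) (h02 x), ?_⟩
            intro hz
            apply hnz1
            funext x
            have h2 := congrFun hz x
            have h3 := h01 x
            have h4 := h02 x
            simp only [Pi.add_apply, Pi.zero_apply] at h2 h3 h4 ⊢
            linarith
          · right
            refine ⟨f2, hf2, m2, hm2, fun x => ?_⟩
            have h2 := hd2 x
            have h3 := h01 x
            simp only [Pi.add_apply, Pi.zero_apply] at h3 ⊢
            linarith
        · rcases hc2 with ⟨h02, hnz2⟩ | ⟨f2, hf2, m2, hm2, hd2⟩
          · right
            refine ⟨f1, hf1, m1, hm1, fun x => ?_⟩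
            have h2 := hd1 x
            have h3 := h02 x
            simp only [Pi.add_apply, Pi.zero_apply] at h3 ⊢
            linarith
          · right
            obtain ⟨r1, hr1⟩ := hreal f1 hf1
            obtain ⟨r2, hr2⟩ := hreal f2 hf2
            refine ⟨f1 + f2, G.add_mem hf1 hf2, m1 + m2, ?_, ?_⟩
            · have h3 := hLP3 f1 hf1 f2 hf2
              rw [hr1, EReal.coe_lt_coe_iff] at hm1
              rw [hr2, EReal.coe_lt_coe_iff] at hm2
              rw [hr1, hr2, ← EReal.coe_add] at h3
              refine lt_of_lt_of_le ?_ h3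
              exact_mod_cast add_lt_add hm1 hm2
            · intro x
              have h2 := hd1 x
              have h3 := hd2 x
              simp only [Pi.add_apply] at h2 h3 ⊢
              linarith
      · intro g hle hg
        obtain ⟨_, hc⟩ := hg
        rcases hc with ⟨h0, hnz⟩ | ⟨f, hf, m, hm, hdom⟩
        · exact hnz (le_antisymm hle h0)
        · have hfc : ∀ x, f x ≤ m := by
            intro x
            have h2 := hdom x
            have h3 := hle x
            simp only [Pi.zero_apply] at h3
            linarith
          exact absurd (hub f hf m hfc) (not_le.2 hm)
    · rintro ⟨f, B⟩ ⟨hf, rfl⟩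
      obtain ⟨r, hr⟩ := hreal f hf
      obtain ⟨M, hM⟩ := hG f hf
      simp only [lpOf, sub_mul_ind_univ']
      have hinf_le : ∀ x, sInf (Set.range f) ≤ f x := by
        intro x
        refine csInf_le ⟨-M, ?_⟩ ⟨x, rfl⟩
        rintro b ⟨x', rfl⟩
        exact (abs_le.mp (hM x')).1
      have hTub : ∀ m : ℝ, (fun x => f x - m) ∈ {g : X → ℝ | IsGamble g ∧ ((0 ≤ g ∧ g ≠ 0) ∨
        ∃ f ∈ G, ∃ m : ℝ, (m : EReal) < lp f Set.univ ∧ ∀ x, f x - m ≤ g x)} → m ≤ r := by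
        intro m hm
        obtain ⟨hgm, hc⟩ := hm
        rcases hc with ⟨h0, hnz⟩ | ⟨f', hf', m', hm', hdom⟩
        · have h1' := hLP1 f hf
          rw [hr, EReal.coe_le_coe_iff] at h1'
          have hm_le : m ≤ sInf (Set.range f) := by
            refine le_csInf (Set.range_nonempty _) ?_
            rintro b ⟨x, rfl⟩
            have h4 : (0:ℝ) ≤ f x - m := h0 x
            linarith
          linarith
        · have hdG : f - f' ∈ G := G.sub_mem hf hf'
          obtain ⟨s, hs⟩ := hreal _ hdG
          obtain ⟨r', hr'⟩ := hreal f' hf'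
          have hm'r : m' < r' := by
            rw [hr', EReal.coe_lt_coe_iff] at hm'
            exact hm'
          have hinf2 : (m - m' : ℝ) ≤ sInf (Set.range (f - f')) := by
            refine le_csInf (Set.range_nonempty _) ?_
            rintro b ⟨x, rfl⟩
            have h4 : f' x - m' ≤ f x - m := hdom x
            simp only [Pi.sub_apply]
            linarith
          have h1 := hLP1 _ hdG
          rw [hs, EReal.coe_le_coe_iff] at h1
          have h2 := hLP3 _ hdG f' hf'
          have hfe : (f - f') + f' = f := by
            funext x; simp
          rw [hfe, hs, hr', hr, ← EReal.coe_add, EReal.coe_le_coe_iff] at h2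
          have : m - m' ≤ s := le_trans hinf2 h1
          linarith
      have hTlow : ∀ c : ℝ, c < r → (fun x => f x - c) ∈ {g : X → ℝ | IsGamble g ∧ ((0 ≤ g ∧ g ≠ 0) ∨
        ∃ f ∈ G, ∃ m : ℝ, (m : EReal) < lp f Set.univ ∧ ∀ x, f x - m ≤ g x)} := by
        intro c hc
        refine ⟨⟨M + |c|, fun x => ?_⟩, Or.inr ⟨f, hf, c, ?_, fun x => le_rfl⟩⟩
        · show |f x - c| ≤ M + |c|
          have := abs_le.mp (hM x)
          have h1 := le_abs_self c
          have h2 := neg_abs_le c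
          rw [abs_le]
          constructor <;> linarith [this.1, this.2]
        · rw [hr, EReal.coe_lt_coe_iff]
          exact hc
      have hTne : Set.Nonempty {m : ℝ | (fun x => f x - m) ∈ {g : X → ℝ | IsGamble g ∧ ((0 ≤ g ∧ g ≠ 0) ∨
        ∃ f ∈ G, ∃ m : ℝ, (m : EReal) < lp f Set.univ ∧ ∀ x, f x - m ≤ g x)}} :=
        ⟨r - 1, hTlow _ (by linarith)⟩
      have hTbd : BddAbove {m : ℝ | (fun x => f x - m) ∈ {g : X → ℝ | IsGamble g ∧ ((0 ≤ g ∧ g ≠ 0) ∨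
        ∃ f ∈ G, ∃ m : ℝ, (m : EReal) < lp f Set.univ ∧ ∀ x, f x - m ≤ g x)}} := ⟨r, fun m hm => hTub m hm⟩
      rw [hr, sSup_image_toEReal' hTne hTbd, EReal.coe_eq_coe_iff]
      exact le_antisymm (csSup_ge_of_forall_lt_mem' hTbd hTlow)
        (csSup_le hTne fun m hm => hTub m hm)


end IPaper
end
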